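/- Let A, B be positive operators on a complex Hilbert space with k·I ≤ A^(−1/2)·B·A^(−1/2) ≤ K·I for some 0 < k ≤ K, and let ν ∈ [0,1]. Define f_min(x) = (x+1−|x−1|)·(ln x)² and f_max(x) = (x+1+|x−1|)·(ln x)². Then (1/4)·ν·(1−ν)·(min_{x∈[k,K]} f_min(x))·A ≤ (1−ν)·A + ν·B − A♯_ν B ≤ (1/4)·ν·(1−ν)·(max_{x∈[k,K]} f_max(x))·A in the operator order. -/

import Mathlib

set_option maxHeartbeats 1000000

open Real Set NNReal

lemma exp_bds {x L t : ℝ} (hx : 0 < x) (hL : L = Real.log x) (ht : t ∈ Set.Icc (0:ℝ) 1) :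
    min x 1 ≤ Real.exp (t * L) ∧ Real.exp (t * L) ≤ max x 1 := by
  have hexpL : Real.exp L = x := by rw [hL, Real.exp_log hx]
  rcases le_total L 0 with h | h
  · have h1 : L ≤ t * L := by nlinarith [ht.1, ht.2]
    have h2 : t * L ≤ 0 := mul_nonpos_of_nonneg_of_nonpos ht.1 h
    constructor
    · exact le_trans (min_le_left _ _) (by rw [← hexpL]; exact Real.exp_le_exp.mpr h1)
    · refine le_trans ?_ (le_max_right _ _)
      simpa using Real.exp_le_exp.mpr h2
  · have h1 : 0 ≤ t * L := mul_nonneg ht.1 h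
    have h2 : t * L ≤ L := by nlinarith [ht.1, ht.2]
    constructor
    · refine le_trans (min_le_right _ _) ?_
      simpa using Real.exp_le_exp.mpr h1
    · exact le_trans (by rw [← hexpL]; exact Real.exp_le_exp.mpr h2) (le_max_left _ _)

lemma lower_scalar {x c : ℝ} (hx : 0 < x)
    (hc : ∀ t ∈ Set.Icc (0:ℝ) 1, c ≤ (Real.log x)^2 * Real.exp (t * Real.log x))
    {ν : ℝ} (hν : ν ∈ Set.Icc (0:ℝ) 1) :
    c/2 * (ν * (1 - ν)) ≤ 1 - ν + ν * x - x ^ ν := by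
  set L : ℝ := Real.log x with hL
  have hexp : ∀ t : ℝ, HasDerivAt (fun s => Real.exp (s * L)) (Real.exp (t * L) * L) t := by
    intro t
    simpa using ((hasDerivAt_id t).mul_const L).exp
  set F : ℝ → ℝ := fun t => 1 - t + t * x - Real.exp (t * L) - c/2 * (t * (1 - t)) with hF
  set F' : ℝ → ℝ := fun t => -1 + x - Real.exp (t * L) * L - c/2 * (1 - 2 * t) with hF'
  have hd1 : ∀ t : ℝ, HasDerivAt F (F' t) t := by
    intro t
    have h := ((((hasDerivAt_const t (1:ℝ)).sub (hasDerivAt_id t)).add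
        ((hasDerivAt_id t).mul_const x)).sub (hexp t)).sub
        (((hasDerivAt_id t).mul ((hasDerivAt_const t (1:ℝ)).sub (hasDerivAt_id t))).const_mul (c/2))
    refine h.congr_deriv ?_
    simp only [hF', id_eq, Pi.sub_apply]; ring
  have hd2 : ∀ t : ℝ, HasDerivAt F' (-(Real.exp (t * L) * L * L) + c) t := by
    intro t
    have h := (((hasDerivAt_const t (-1 + x : ℝ))).sub ((hexp t).mul_const L)).sub
        (((hasDerivAt_const t (1:ℝ)).sub ((hasDerivAt_id t).const_mul 2)).const_mul (c/2))
    refine h.congr_deriv ?_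
    ring
  have hconc : ConcaveOn ℝ (Set.Icc 0 1) F := by
    refine concaveOn_of_hasDerivWithinAt2_nonpos (convex_Icc 0 1)
      (Continuous.continuousOn (by fun_prop)) (fun t ht => (hd1 t).hasDerivWithinAt)
      (fun t ht => (hd2 t).hasDerivWithinAt) (fun t ht => ?_)
    have ht' : t ∈ Set.Icc (0:ℝ) 1 := interior_subset ht
    have := hc t ht'
    nlinarith [this]
  have hF0 : F 0 = 0 := by simp [hF]
  have hF1 : F 1 = 0 := by simp [hF, hL, Real.exp_log hx]
  have := hconc.ge_on_segment' (x := 0) (y := 1) (a := 1 - ν) (b := ν)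
    (Set.left_mem_Icc.mpr zero_le_one) (Set.right_mem_Icc.mpr zero_le_one)
    (by linarith [hν.2]) hν.1 (by ring)
  rw [hF0, hF1, min_self] at this
  have hsm : (1 - ν) • (0:ℝ) + ν • (1:ℝ) = ν := by simp
  rw [hsm] at this
  have hxν : x ^ ν = Real.exp (ν * L) := by
    rw [Real.rpow_def_of_pos hx, mul_comm]
  have hFν : F ν = 1 - ν + ν * x - x ^ ν - c/2 * (ν * (1 - ν)) := by
    rw [hF]; simp only; rw [hxν]
  linarith [hFν ▸ this]

lemma upper_scalar {x c : ℝ} (hx : 0 < x)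
    (hc : ∀ t ∈ Set.Icc (0:ℝ) 1, (Real.log x)^2 * Real.exp (t * Real.log x) ≤ c)
    {ν : ℝ} (hν : ν ∈ Set.Icc (0:ℝ) 1) :
    1 - ν + ν * x - x ^ ν ≤ c/2 * (ν * (1 - ν)) := by
  set L : ℝ := Real.log x with hL
  have hexp : ∀ t : ℝ, HasDerivAt (fun s => Real.exp (s * L)) (Real.exp (t * L) * L) t := by
    intro t
    simpa using ((hasDerivAt_id t).mul_const L).exp
  set F : ℝ → ℝ := fun t => c/2 * (t * (1 - t)) - (1 - t + t * x - Real.exp (t * L)) with hF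
  set F' : ℝ → ℝ := fun t => c/2 * (1 - 2 * t) - (-1 + x - Real.exp (t * L) * L) with hF'
  have hd1 : ∀ t : ℝ, HasDerivAt F (F' t) t := by
    intro t
    have h := ((((hasDerivAt_id t).mul ((hasDerivAt_const t (1:ℝ)).sub
        (hasDerivAt_id t))).const_mul (c/2)).sub
        ((((hasDerivAt_const t (1:ℝ)).sub (hasDerivAt_id t)).add
        ((hasDerivAt_id t).mul_const x)).sub (hexp t)))
    refine h.congr_deriv ?_
    simp only [hF', id_eq, Pi.sub_apply]; ring
  have hd2 : ∀ t : ℝ, HasDerivAt F' (-c + Real.exp (t * L) * L * L) t := by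
    intro t
    have h := ((((hasDerivAt_const t (1:ℝ)).sub ((hasDerivAt_id t).const_mul 2)).const_mul
        (c/2)).sub ((hasDerivAt_const t (-1 + x : ℝ)).sub ((hexp t).mul_const L)))
    refine h.congr_deriv ?_
    ring
  have hconc : ConcaveOn ℝ (Set.Icc 0 1) F := by
    refine concaveOn_of_hasDerivWithinAt2_nonpos (convex_Icc 0 1)
      (Continuous.continuousOn (by fun_prop)) (fun t ht => (hd1 t).hasDerivWithinAt)
      (fun t ht => (hd2 t).hasDerivWithinAt) (fun t ht => ?_)
    have ht' : t ∈ Set.Icc (0:ℝ) 1 := interior_subset ht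
    have := hc t ht'
    nlinarith [this]
  have hF0 : F 0 = 0 := by simp [hF]
  have hF1 : F 1 = 0 := by simp [hF, hL, Real.exp_log hx]
  have := hconc.ge_on_segment' (x := 0) (y := 1) (a := 1 - ν) (b := ν)
    (Set.left_mem_Icc.mpr zero_le_one) (Set.right_mem_Icc.mpr zero_le_one)
    (by linarith [hν.2]) hν.1 (by ring)
  rw [hF0, hF1, min_self] at this
  have hsm : (1 - ν) • (0:ℝ) + ν • (1:ℝ) = ν := by simp
  rw [hsm] at this
  have hxν : x ^ ν = Real.exp (ν * L) := by
    rw [Real.rpow_def_of_pos hx, mul_comm]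
  have hFν : F ν = c/2 * (ν * (1 - ν)) - (1 - ν + ν * x - x ^ ν) := by
    rw [hF]; simp only; rw [hxν]
  linarith [hFν ▸ this]
set_option synthInstance.maxHeartbeats 1000000 in
theorem stmt_17 {H : Type*} [NormedAddCommGroup H] [InnerProductSpace ℂ H] [CompleteSpace H]
    (A B : H →L[ℂ] H) (hA : 0 ≤ A) (hB : 0 ≤ B) (hAinv : IsUnit A)
    (k K : ℝ) (hk : 0 < k) (hkK : k ≤ K) (ν : ℝ) (hν : ν ∈ Set.Icc (0:ℝ) 1)
    (hkC : k • (1 : H →L[ℂ] H) ≤ CFC.rpow A (-(1/2) : ℝ) * B * CFC.rpow A (-(1/2) : ℝ))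
    (hCK : CFC.rpow A (-(1/2) : ℝ) * B * CFC.rpow A (-(1/2) : ℝ) ≤ K • (1 : H →L[ℂ] H))
    (fmin fmax : ℝ → ℝ)
    (hfmin : ∀ x > (0:ℝ), fmin x = (x + 1 - |x - 1|) * (Real.log x)^2)
    (hfmax : ∀ x > (0:ℝ), fmax x = (x + 1 + |x - 1|) * (Real.log x)^2) :
    (1/4 * ν * (1 - ν) * sInf (fmin '' Set.Icc k K)) • A
      ≤ (1 - ν) • A + ν • B -
        CFC.sqrt A * CFC.rpow (CFC.rpow A (-(1/2) : ℝ) * B * CFC.rpow A (-(1/2) : ℝ)) ν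
          * CFC.sqrt A ∧
    (1 - ν) • A + ν • B -
        CFC.sqrt A * CFC.rpow (CFC.rpow A (-(1/2) : ℝ) * B * CFC.rpow A (-(1/2) : ℝ)) ν
          * CFC.sqrt A
      ≤ (1/4 * ν * (1 - ν) * sSup (fmax '' Set.Icc k K)) • A := by
  obtain ⟨hν0, hν1⟩ := hν
  set S := CFC.sqrt A with hSdef
  set T := CFC.rpow A (-(1/2) : ℝ) * B * CFC.rpow A (-(1/2) : ℝ) with hTdef
  have h01 : (0 : H →L[ℂ] H) ≤ 1 := by simpa using star_mul_self_nonneg (1 : H →L[ℂ] H)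
  have hT : 0 ≤ T := le_trans (smul_nonneg hk.le h01) hkC
  have hTsa : IsSelfAdjoint T := .of_nonneg hT
  have hspec : spectrum ℝ T ⊆ Set.Icc k K := by
    intro y hy
    constructor
    · refine (algebraMap_le_iff_le_spectrum (R := ℝ) (a := T) hTsa).mp ?_ y hy
      rwa [Algebra.algebraMap_eq_smul_one]
    · refine (le_algebraMap_iff_spectrum_le (R := ℝ) (a := T) hTsa).mp ?_ y hy
      rwa [Algebra.algebraMap_eq_smul_one]
  -- rpow as a real cfc
  have hrpow : CFC.rpow T ν = cfc (fun y : ℝ => y ^ ν) T := by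
    rw [show CFC.rpow T ν = cfc (fun x : ℝ≥0 => x ^ ν) T from rfl, cfc_nnreal_eq_real _ T hT]
    refine cfc_congr fun y hy => ?_
    have hy' : 0 < y := lt_of_lt_of_le hk (hspec hy).1
    rw [NNReal.coe_rpow, Real.coe_toNNReal _ hy'.le]
  have hrpow_cont : ContinuousOn (fun y : ℝ => y ^ ν) (spectrum ℝ T) :=
    continuousOn_id.rpow_const fun y hy => Or.inr hν0
  have hg_cont : ContinuousOn (fun y : ℝ => 1 - ν + ν * y - y ^ ν) (spectrum ℝ T) :=
    ((continuousOn_const.add (continuousOn_const.mul continuousOn_id)).sub hrpow_cont)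
  have hsplit : cfc (fun y : ℝ => 1 - ν + ν * y - y ^ ν) T
      = (1 - ν) • (1 : H →L[ℂ] H) + ν • T - CFC.rpow T ν := by
    calc cfc (fun y : ℝ => 1 - ν + ν * y - y ^ ν) T
        = cfc (fun y : ℝ => 1 - ν + ν * y) T - cfc (fun y : ℝ => y ^ ν) T :=
          cfc_sub _ _ T (by fun_prop) hrpow_cont
      _ = algebraMap ℝ (H →L[ℂ] H) (1 - ν) + cfc (fun y : ℝ => ν * y) T - CFC.rpow T ν := by
          rw [cfc_const_add _ _ T (by fun_prop) hTsa, hrpow]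
      _ = (1 - ν) • (1 : H →L[ℂ] H) + ν • T - CFC.rpow T ν := by
          rw [cfc_const_mul_id _ T hTsa, Algebra.algebraMap_eq_smul_one]
  -- sInf / sSup facts
  have hcontmin : ContinuousOn (fun x : ℝ => (x + 1 - |x - 1|) * Real.log x ^ 2)
      (Set.Icc k K) := by
    refine ContinuousOn.mul (Continuous.continuousOn (by fun_prop)) ?_
    exact (Real.continuousOn_log.mono fun x hx =>
      (ne_of_gt (lt_of_lt_of_le hk hx.1) : x ≠ 0)).pow 2
  have hcontmax : ContinuousOn (fun x : ℝ => (x + 1 + |x - 1|) * Real.log x ^ 2)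
      (Set.Icc k K) := by
    refine ContinuousOn.mul (Continuous.continuousOn (by fun_prop)) ?_
    exact (Real.continuousOn_log.mono fun x hx =>
      (ne_of_gt (lt_of_lt_of_le hk hx.1) : x ≠ 0)).pow 2
  have himgmin : fmin '' Set.Icc k K
      = (fun x : ℝ => (x + 1 - |x - 1|) * Real.log x ^ 2) '' Set.Icc k K :=
    Set.image_congr fun x hx => hfmin x (lt_of_lt_of_le hk hx.1)
  have himgmax : fmax '' Set.Icc k K
      = (fun x : ℝ => (x + 1 + |x - 1|) * Real.log x ^ 2) '' Set.Icc k K :=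
    Set.image_congr fun x hx => hfmax x (lt_of_lt_of_le hk hx.1)
  have hbddmin : BddBelow (fmin '' Set.Icc k K) := by
    rw [himgmin]; exact (isCompact_Icc.image_of_continuousOn hcontmin).bddBelow
  have hbddmax : BddAbove (fmax '' Set.Icc k K) := by
    rw [himgmax]; exact (isCompact_Icc.image_of_continuousOn hcontmax).bddAbove
  have hnn : (0:ℝ) ≤ 1/4 * ν * (1 - ν) := by nlinarith
  -- pointwise inequalities on the spectrum
  have hkey_low : ∀ y ∈ spectrum ℝ T,
      (fun _ : ℝ => 1/4 * ν * (1 - ν) * sInf (fmin '' Set.Icc k K)) y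
        ≤ (fun y : ℝ => 1 - ν + ν * y - y ^ ν) y := by
    intro y hy
    have hyI := hspec hy
    have hy0 : 0 < y := lt_of_lt_of_le hk hyI.1
    have hmin : y + 1 - |y - 1| = 2 * min y 1 := by
      rcases le_total y 1 with h | h
      · rw [abs_of_nonpos (by linarith), min_eq_left h]; ring
      · rw [abs_of_nonneg (by linarith), min_eq_right h]; ring
    have hs1 : sInf (fmin '' Set.Icc k K) ≤ fmin y := csInf_le hbddmin ⟨y, hyI, rfl⟩
    have hs2 : fmin y = 2 * min y 1 * Real.log y ^ 2 := by rw [hfmin y hy0, hmin]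
    have hc : ∀ t ∈ Set.Icc (0:ℝ) 1,
        min y 1 * Real.log y ^ 2 ≤ (Real.log y)^2 * Real.exp (t * Real.log y) := by
      intro t ht
      have h1 := (exp_bds hy0 rfl ht).1
      nlinarith [sq_nonneg (Real.log y)]
    have hlow := lower_scalar hy0 hc ⟨hν0, hν1⟩
    calc 1/4 * ν * (1 - ν) * sInf (fmin '' Set.Icc k K)
        ≤ 1/4 * ν * (1 - ν) * fmin y := mul_le_mul_of_nonneg_left hs1 hnn
      _ = (min y 1 * Real.log y ^ 2)/2 * (ν * (1 - ν)) := by rw [hs2]; ring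
      _ ≤ 1 - ν + ν * y - y ^ ν := hlow
  have hkey_up : ∀ y ∈ spectrum ℝ T,
      (fun y : ℝ => 1 - ν + ν * y - y ^ ν) y
        ≤ (fun _ : ℝ => 1/4 * ν * (1 - ν) * sSup (fmax '' Set.Icc k K)) y := by
    intro y hy
    have hyI := hspec hy
    have hy0 : 0 < y := lt_of_lt_of_le hk hyI.1
    have hmax : y + 1 + |y - 1| = 2 * max y 1 := by
      rcases le_total y 1 with h | h
      · rw [abs_of_nonpos (by linarith), max_eq_right h]; ring
      · rw [abs_of_nonneg (by linarith), max_eq_left h]; ring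
    have hs1 : fmax y ≤ sSup (fmax '' Set.Icc k K) := le_csSup hbddmax ⟨y, hyI, rfl⟩
    have hs2 : fmax y = 2 * max y 1 * Real.log y ^ 2 := by rw [hfmax y hy0, hmax]
    have hc : ∀ t ∈ Set.Icc (0:ℝ) 1,
        (Real.log y)^2 * Real.exp (t * Real.log y) ≤ max y 1 * Real.log y ^ 2 := by
      intro t ht
      have h1 := (exp_bds hy0 rfl ht).2
      nlinarith [sq_nonneg (Real.log y)]
    have hup := upper_scalar hy0 hc ⟨hν0, hν1⟩
    calc 1 - ν + ν * y - y ^ ν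
        ≤ (max y 1 * Real.log y ^ 2)/2 * (ν * (1 - ν)) := hup
      _ = 1/4 * ν * (1 - ν) * fmax y := by rw [hs2]; ring
      _ ≤ 1/4 * ν * (1 - ν) * sSup (fmax '' Set.Icc k K) := mul_le_mul_of_nonneg_left hs1 hnn
  have hlowop := cfc_mono hkey_low continuousOn_const hg_cont
  have hupop := cfc_mono hkey_up hg_cont continuousOn_const
  rw [cfc_const _ T hTsa, hsplit, Algebra.algebraMap_eq_smul_one] at hlowop hupop
  -- conjugation by S = sqrt A
  have hSsa : IsSelfAdjoint S := .of_nonneg (CFC.sqrt_nonneg A)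
  have hSS : S * S = A := CFC.sqrt_mul_sqrt_self A hA
  have h0spec : (0:ℝ≥0) ∉ spectrum ℝ≥0 A := spectrum.zero_notMem ℝ≥0 hAinv
  have hSrpow : S = CFC.rpow A (1/2 : ℝ) := CFC.sqrt_eq_rpow
  have hhalf : CFC.rpow A (1/2 : ℝ) * CFC.rpow A (-(1/2) : ℝ) = 1 := by
    simpa using CFC.rpow_mul_rpow_neg (1/2 : ℝ) (hAinv.isStrictlyPositive hA)
  have hhalf' : CFC.rpow A (-(1/2) : ℝ) * CFC.rpow A (1/2 : ℝ) = 1 := by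
    simpa using CFC.rpow_neg_mul_rpow (1/2 : ℝ) (hAinv.isStrictlyPositive hA)
  have hSTS : S * T * S = B := by
    rw [hTdef, hSrpow]
    have hassoc : CFC.rpow A (1/2:ℝ) * (CFC.rpow A (-(1/2):ℝ) * B * CFC.rpow A (-(1/2):ℝ))
          * CFC.rpow A (1/2:ℝ)
        = (CFC.rpow A (1/2:ℝ) * CFC.rpow A (-(1/2):ℝ)) * B
          * (CFC.rpow A (-(1/2):ℝ) * CFC.rpow A (1/2:ℝ)) := by
      simp only [mul_assoc]
    rw [hassoc, hhalf, hhalf', one_mul, mul_one]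
  have hL : ∀ c : ℝ, S * (c • (1 : H →L[ℂ] H)) * S = c • A := fun c => by
    rw [mul_smul_comm, mul_one, smul_mul_assoc, hSS]
  have hR : S * ((1 - ν) • (1 : H →L[ℂ] H) + ν • T - CFC.rpow T ν) * S
      = (1 - ν) • A + ν • B - S * CFC.rpow T ν * S := by
    simp only [mul_add, add_mul, mul_sub, sub_mul, mul_smul_comm, smul_mul_assoc, mul_one,
      hSS, hSTS]
  constructor
  · have hconj := hSsa.conjugate_le_conjugate hlowop
    rwa [hL, hR] at hconj
  · have hconj := hSsa.conjugate_le_conjugate hupop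
    rwa [hL, hR] at hconj
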